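/- Let h > 1 and v ∈ [0,1]. Then (1-v) + v·h - h^v ≤ L(1,h)·log S(h), where L(1,h) = (h-1)/log h is the logarithmic mean and S(h) = h^(1/(h-1))/(e·log h^(1/(h-1))) is the Specht ratio. -/

import Mathlib

theorem stmt_8 (h v : ℝ) (hh : 1 < h) (hv0 : 0 ≤ v) (hv1 : v ≤ 1) :
    (1 - v) + v * h - h ^ v ≤
      (h - 1) / Real.log h *
        Real.log (h ^ (1 / (h - 1)) /
          (Real.exp 1 * ((1 / (h - 1)) * Real.log h))) := by
  have hh0 : (0:ℝ) < h := by linarith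
  have hl : 0 < Real.log h := Real.log_pos hh
  have hh1 : (0:ℝ) < h - 1 := by linarith
  set l := Real.log h with hldef
  set L : ℝ := (h - 1) / l with hLdef
  have hL : 0 < L := div_pos hh1 hl
  have hLl : L * l = h - 1 := div_mul_cancel₀ _ (ne_of_gt hl)
  have hpos1 : (0:ℝ) < h ^ (1/(h-1)) := Real.rpow_pos_of_pos hh0 _
  have hinv : (1/(h-1)) * l = L⁻¹ := by
    rw [hLdef, inv_div]; ring
  have hlogdiv : Real.log (h ^ (1/(h-1)) / (Real.exp 1 * ((1/(h-1)) * l)))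
      = (1/(h-1)) * l - (1 + Real.log ((1/(h-1)) * l)) := by
    rw [Real.log_div (ne_of_gt hpos1) (by positivity), Real.log_rpow hh0,
      Real.log_mul (Real.exp_ne_zero 1) (by positivity), Real.log_exp]
  rw [hlogdiv, hinv, Real.log_inv]
  have hLinv : L * L⁻¹ = 1 := mul_inv_cancel₀ (ne_of_gt hL)
  -- tangent line bound: h^v = exp(v*l) ≥ L * (v*l - log L + 1)
  have hhv : h ^ v = Real.exp (v * l) := by
    rw [Real.rpow_def_of_pos hh0, hldef, mul_comm]
  have hexp : Real.exp (v * l - Real.log L) ≥ (v * l - Real.log L) + 1 :=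
    Real.add_one_le_exp _
  have hkey : L * ((v * l - Real.log L) + 1) ≤ h ^ v := by
    rw [hhv]
    calc L * ((v * l - Real.log L) + 1)
        ≤ L * Real.exp (v * l - Real.log L) := by nlinarith
      _ = Real.exp (Real.log L) * Real.exp (v * l - Real.log L) := by
          rw [Real.exp_log hL]
      _ = Real.exp (v * l) := by rw [← Real.exp_add]; ring_nf
  nlinarith [hkey, hLl, hLinv]
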